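/- Expansion correctness: given x_1,...,x_N and nonnegative degrees d_1,...,d_N with l_i = d_1+...+d_i and l_N ≤ M, define y : Fin M → Option α by y_j = first non-⊥ element of the sequence z_j, z_{j+1}, ..., z_M, where z_{l_i} = some x_i whenever d_i > 0 and z_k = ⊥ otherwise. Then for every i with d_i > 0 and every j with l_{i−1} < j ≤ l_i, y_j = some x_i; and y_j = ⊥ for l_N < j ≤ M. -/

import Mathlib

lemma filterMap_range'_none {α : Type*} (z : ℕ → Option α) :
    ∀ (n j : ℕ), (∀ k, j ≤ k → k < j + n → z k = none) →
      ((List.range' j n).map z).filterMap id = [] := by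
  intro n
  induction n with
  | zero => intro j _; simp
  | succ n ih =>
      intro j h
      rw [List.range'_succ]
      simp only [List.map_cons, List.filterMap_cons]
      rw [h j le_rfl (by omega)]
      exact ih (j + 1) (fun k hk hk' => h k (by omega) (by omega))

/-- Expansion correctness: with `l i = d 1 + ... + d i ≤ M`, `z (l i) = some (x i)` for
`d i > 0` and `z k = ⊥` at all other positions in `[1, M]`, back-filling each position
with the first non-`⊥` element at or after it yields `y j = some (x i)` for all
`l (i−1) < j ≤ l i` (when `d i > 0`), and `y j = ⊥` for `l N < j ≤ M`. -/
theorem expansion_correct {α : Type*} (N M : ℕ) (x : ℕ → α) (d : ℕ → ℕ)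
    (l : ℕ → ℕ) (hl : ∀ n, l n = ∑ k ∈ Finset.range n, d (k + 1))
    (hlN : l N ≤ M)
    (z : ℕ → Option α)
    (hz1 : ∀ i, 1 ≤ i → i ≤ N → 0 < d i → z (l i) = some (x i))
    (hz2 : ∀ k, 1 ≤ k → k ≤ M →
      (¬ ∃ i, 1 ≤ i ∧ i ≤ N ∧ 0 < d i ∧ l i = k) → z k = none)
    (y : ℕ → Option α)
    (hy : ∀ j, y j = (((List.range' j (M + 1 - j)).map z).filterMap id).head?) :
    (∀ i, 1 ≤ i → i ≤ N → 0 < d i →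
      ∀ j, l (i - 1) < j → j ≤ l i → y j = some (x i)) ∧
    (∀ j, l N < j → j ≤ M → y j = none) := by
  have lmono : ∀ a b : ℕ, a ≤ b → l a ≤ l b := by
    intro a b hab
    rw [hl, hl]
    exact Finset.sum_le_sum_of_subset (Finset.range_subset_range.mpr hab)
  constructor
  · intro i hi1 hiN hdi j hj1 hj2
    have hliM : l i ≤ M := le_trans (lmono i N hiN) hlN
    have hjM : j ≤ M := le_trans hj2 hliM
    -- split range
    have hsplit : List.range' j (M + 1 - j) =
        List.range' j (l i - j) ++ List.range' (l i) (M + 1 - l i) := by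
      have := List.range'_append (s := j) (m := l i - j) (n := M + 1 - l i) (step := 1)
      rw [show j + 1 * (l i - j) = l i by omega] at this
      rw [show M + 1 - j = (l i - j) + (M + 1 - l i) by omega]
      exact this.symm
    rw [hy, hsplit, List.map_append, List.filterMap_append]
    have hnone : ((List.range' j (l i - j)).map z).filterMap id = [] := by
      apply filterMap_range'_none
      intro k hk hk'
      apply hz2 k (by omega) (by omega)
      rintro ⟨i', hi'1, hi'N, hdi', hli'⟩
      rcases le_or_gt i' (i - 1) with hc | hc
      · have := lmono i' (i - 1) hc; omega
      · have := lmono i i' (by omega); omega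
    rw [hnone]
    have hpos : M + 1 - l i = (M - l i) + 1 := by omega
    rw [hpos, List.range'_succ, List.nil_append]
    simp only [List.map_cons, List.filterMap_cons, hz1 i hi1 hiN hdi, id]
    rfl
  · intro j hj1 hj2
    rw [hy]
    have hnone : ((List.range' j (M + 1 - j)).map z).filterMap id = [] := by
      apply filterMap_range'_none
      intro k hk hk'
      apply hz2 k (by omega) (by omega)
      rintro ⟨i', hi'1, hi'N, hdi', hli'⟩
      have := lmono i' N hi'N; omega
    rw [hnone]; rfl
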